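/- arXiv:1309.1200 — 4 statements merged into one kernel-verified Lean document; each statement's English description precedes it below -/
import Mathlib

section
/- For a point (λ_p, λ_s) with 0 < λ_p < μ_p, the interval of stabilizing values of a, namely (λ_s·μ_p/(f_sd(μ_p-λ_p)), 1 - f_ps(1-f_pd)·λ_p/(f_sd(μ_p-λ_p))), is nonempty if and only if λ_s < f_sd - [(f_sd + f_ps(1-f_pd))/μ_p]·λ_p. -/
/-- the interval of stabilizing service probabilities is nonempty iff
lam_s < f_sd - [(f_sd + f_ps(1-f_pd))/μ_p]·lam_p. -/
theorem stabilizing_interval_nonempty_iff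
    (f_pd f_ps f_sd : ℝ)
    (hpd : f_pd ∈ Set.Ioo (0:ℝ) 1) (hps : f_ps ∈ Set.Ioo (0:ℝ) 1)
    (hsd : f_sd ∈ Set.Ioo (0:ℝ) 1)
    (μ_p : ℝ) (hμ : μ_p = f_pd + f_ps * (1 - f_pd))
    (lam_p lam_s : ℝ) (hlp : 0 < lam_p) (hlpμ : lam_p < μ_p) (hls : 0 < lam_s) :
    (Set.Ioo (lam_s * μ_p / (f_sd * (μ_p - lam_p)))
        (1 - f_ps * (1 - f_pd) * lam_p / (f_sd * (μ_p - lam_p)))).Nonempty ↔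
      lam_s < f_sd - (f_sd + f_ps * (1 - f_pd)) / μ_p * lam_p := by
  obtain ⟨hsd0, hsd1⟩ := hsd
  have hμ0 : 0 < μ_p := lt_trans hlp hlpμ
  have hD : 0 < f_sd * (μ_p - lam_p) := mul_pos hsd0 (sub_pos.mpr hlpμ)
  rw [Set.nonempty_Ioo,
    show (1 : ℝ) - f_ps * (1 - f_pd) * lam_p / (f_sd * (μ_p - lam_p)) =
      (f_sd * (μ_p - lam_p) - f_ps * (1 - f_pd) * lam_p) / (f_sd * (μ_p - lam_p)) from by
        field_simp; rw [sub_div, mul_div_cancel_right₀ _ (sub_pos.mpr hlpμ).ne'],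
    div_lt_div_iff_of_pos_right hD,
    show f_sd - (f_sd + f_ps * (1 - f_pd)) / μ_p * lam_p =
      (f_sd * (μ_p - lam_p) - f_ps * (1 - f_pd) * lam_p) / μ_p from by
        field_simp; ring,
    lt_div_iff₀ hμ0]
end

section
/- The union over a ∈ (0,1) of the regions R(a) = {(λ_p, λ_s) : λ_p > 0, λ_s > 0, λ_p·f_ps(1-f_pd) < f_sd(1-a)(μ_p-λ_p), λ_s·μ_p < a·f_sd·(μ_p-λ_p)} equals the region {(λ_p,λ_s) : λ_p > 0, λ_s > 0, λ_s < f_sd - [(f_sd+f_ps(1-f_pd))/μ_p]·λ_p}. -/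
/-- the union over a ∈ (0,1) of the randomized-policy stability regions
equals the work-conserving stability region. -/
theorem union_of_stability_regions
    (f_pd f_ps f_sd : ℝ)
    (hpd : f_pd ∈ Set.Ioo (0:ℝ) 1) (hps : f_ps ∈ Set.Ioo (0:ℝ) 1)
    (hsd : f_sd ∈ Set.Ioo (0:ℝ) 1)
    (μ_p : ℝ) (hμ : μ_p = f_pd + f_ps * (1 - f_pd)) :
    (⋃ a ∈ Set.Ioo (0:ℝ) 1,
        {p : ℝ × ℝ | 0 < p.1 ∧ 0 < p.2 ∧
          p.1 * (f_ps * (1 - f_pd)) < f_sd * (1 - a) * (μ_p - p.1) ∧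
          p.2 * μ_p < a * f_sd * (μ_p - p.1)}) =
      {p : ℝ × ℝ | 0 < p.1 ∧ 0 < p.2 ∧
        p.2 < f_sd - (f_sd + f_ps * (1 - f_pd)) / μ_p * p.1} := by
  obtain ⟨hpd0, hpd1⟩ := hpd
  obtain ⟨hps0, hps1⟩ := hps
  obtain ⟨hsd0, hsd1⟩ := hsd
  have hc : 0 < f_ps * (1 - f_pd) := mul_pos hps0 (by linarith)
  have hμ0 : 0 < μ_p := by rw [hμ]; linarith
  ext p
  simp only [Set.mem_iUnion, Set.mem_setOf_eq, Set.mem_Ioo]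
  have hEq : f_sd - (f_sd + f_ps * (1 - f_pd)) / μ_p * p.1
      = (f_sd * μ_p - (f_sd + f_ps * (1 - f_pd)) * p.1) / μ_p := by
    field_simp
  constructor
  · rintro ⟨a, ⟨ha0, ha1⟩, hp1, hp2, h3, h4⟩
    refine ⟨hp1, hp2, ?_⟩
    rw [hEq, lt_div_iff₀ hμ0]
    have e : a * f_sd * (μ_p - p.1) + f_sd * (1 - a) * (μ_p - p.1)
        = f_sd * (μ_p - p.1) := by ring
    have e2 : f_sd * μ_p - (f_sd + f_ps * (1 - f_pd)) * p.1
        = f_sd * (μ_p - p.1) - p.1 * (f_ps * (1 - f_pd)) := by ring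
    linarith
  · rintro ⟨hp1, hp2, hp3⟩
    rw [hEq, lt_div_iff₀ hμ0] at hp3
    set c := f_ps * (1 - f_pd) with hcdef
    set D := f_sd * (μ_p - p.1) with hDdef
    have e3 : D - c * p.1 = f_sd * μ_p - (f_sd + c) * p.1 := by
      rw [hDdef]; ring
    have key : p.2 * μ_p < D - c * p.1 := by linarith
    have hpos1 : 0 < p.2 * μ_p := mul_pos hp2 hμ0
    have hpos2 : 0 < c * p.1 := mul_pos hc hp1
    have hD : 0 < D := by linarith
    refine ⟨(p.2 * μ_p + D - c * p.1) / (2 * D), ⟨?_, ?_⟩, hp1, hp2, ?_, ?_⟩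
    · exact div_pos (by linarith) (by linarith)
    · rw [div_lt_one (by linarith)]
      linarith
    · have hA : f_sd * (1 - (p.2 * μ_p + D - c * p.1) / (2 * D)) * (μ_p - p.1)
          = (D - p.2 * μ_p + c * p.1) / 2 := by
        rw [hDdef]; field_simp [(pos_of_mul_pos_right (show 0 < f_sd * (μ_p - p.1) from hD) hsd0.le).ne']; ring
      rw [hA, lt_div_iff₀ (by norm_num : (0:ℝ) < 2)]
      linarith
    · have hA : (p.2 * μ_p + D - c * p.1) / (2 * D) * f_sd * (μ_p - p.1)
          = (p.2 * μ_p + D - c * p.1) / 2 := by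
        rw [hDdef]; field_simp [(pos_of_mul_pos_right (show 0 < f_sd * (μ_p - p.1) from hD) hsd0.le).ne']
      rw [hA, lt_div_iff₀ (by norm_num : (0:ℝ) < 2)]
      linarith
end

section
/- The empty-system probability G(0,0) = [a·f_sd·(μ_p - λ_p) - λ_s·μ_p] / (a·f_sd·μ_p) lies strictly in (0,1) whenever 0 < λ_p < μ_p, λ_s > 0, and λ_s·μ_p < a·f_sd·(μ_p - λ_p) with a, f_sd ∈ (0,1). -/
/-- the empty-system probability G(0,0) lies strictly in (0,1). -/
theorem empty_system_probability_in_unit_interval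
    (f_pd f_ps f_sd a : ℝ)
    (hpd : f_pd ∈ Set.Ioo (0:ℝ) 1) (hps : f_ps ∈ Set.Ioo (0:ℝ) 1)
    (hsd : f_sd ∈ Set.Ioo (0:ℝ) 1) (ha : a ∈ Set.Ioo (0:ℝ) 1)
    (μ_p : ℝ) (hμ : μ_p = f_pd + f_ps * (1 - f_pd))
    (lam_p lam_s : ℝ) (hlp : 0 < lam_p) (hlpμ : lam_p < μ_p) (hls : 0 < lam_s)
    (hstab : lam_s * μ_p < a * f_sd * (μ_p - lam_p)) :
    0 < (a * f_sd * (μ_p - lam_p) - lam_s * μ_p) / (a * f_sd * μ_p) ∧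
      (a * f_sd * (μ_p - lam_p) - lam_s * μ_p) / (a * f_sd * μ_p) < 1 := by
  have hμpos : 0 < μ_p := hlp.trans hlpμ
  have hden : 0 < a * f_sd * μ_p := by
    have := ha.1; have := hsd.1; positivity
  constructor
  · apply div_pos _ hden; linarith
  · rw [div_lt_one hden]
    nlinarith [mul_pos (mul_pos ha.1 hsd.1) hlp]
end

section
/- Define D_s(a) = N_s(a)/λ_s with N_s(a) = [λ_p·λ_s·A(a) + (λ_s²-λ_s)·B·(B+λ_p)]/(B·C(a)), A(a) = a·f_sd(μ_p-1), B = μ_p-λ_p, C(a) = (λ_s - a·f_sd)·μ_p + a·f_sd·λ_p. Then ∂D_s/∂a < 0 for all a in the stability interval, i.e., D_s is strictly decreasing in a; the sign follows because ∂D_s/∂a is a positive multiple of λ_s(λ_p² - λ_p) + (μ_p - λ_p)[λ_s·μ_p - (μ_p - λ_p)], which is negative whenever 0 < λ_p < μ_p < 1, 0 < λ_s < 1, and λ_s·μ_p < a·f_sd·(μ_p-λ_p) with a·f_sd < 1. -/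
/-- the secondary delay D_s(a) is strictly decreasing in a on the
stability interval: its derivative is a positive multiple of
lam_s(lam_p²-lam_p) + (μ_p-lam_p)[lam_s μ_p - (μ_p-lam_p)], which is negative. -/
theorem Ds_strictly_decreasing
    (f_pd f_ps f_sd : ℝ)
    (hpd : f_pd ∈ Set.Ioo (0:ℝ) 1) (hps : f_ps ∈ Set.Ioo (0:ℝ) 1)
    (hsd : f_sd ∈ Set.Ioo (0:ℝ) 1)
    (μ_p : ℝ) (hμ : μ_p = f_pd + f_ps * (1 - f_pd)) (hμ1 : μ_p < 1)
    (lam_p lam_s : ℝ) (hlp : 0 < lam_p) (hlpμ : lam_p < μ_p)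
    (hls : 0 < lam_s) (hls1 : lam_s < 1) :
    ∀ a ∈ Set.Ioo (0:ℝ) 1, lam_s * μ_p < a * f_sd * (μ_p - lam_p) →
      (∃ K : ℝ, 0 < K ∧
        deriv (fun a : ℝ =>
          ((lam_p * lam_s * (a * f_sd * (μ_p - 1)) +
              (lam_s ^ 2 - lam_s) * (μ_p - lam_p) * ((μ_p - lam_p) + lam_p)) /
            ((μ_p - lam_p) * ((lam_s - a * f_sd) * μ_p + a * f_sd * lam_p))) / lam_s) a
          = K * (lam_s * (lam_p ^ 2 - lam_p) +
              (μ_p - lam_p) * (lam_s * μ_p - (μ_p - lam_p)))) ∧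
      lam_s * (lam_p ^ 2 - lam_p) + (μ_p - lam_p) * (lam_s * μ_p - (μ_p - lam_p)) < 0 ∧
      deriv (fun a : ℝ =>
          ((lam_p * lam_s * (a * f_sd * (μ_p - 1)) +
              (lam_s ^ 2 - lam_s) * (μ_p - lam_p) * ((μ_p - lam_p) + lam_p)) /
            ((μ_p - lam_p) * ((lam_s - a * f_sd) * μ_p + a * f_sd * lam_p))) / lam_s) a < 0 := by
  obtain ⟨hpd0, hpd1⟩ := hpd
  obtain ⟨hps0, hps1⟩ := hps
  obtain ⟨hsd0, hsd1⟩ := hsd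
  intro a ha hstab
  obtain ⟨ha0, ha1⟩ := ha
  have hμ0 : 0 < μ_p := lt_trans hlp hlpμ
  have hB : 0 < μ_p - lam_p := by linarith
  -- the denominator at a
  set D0 : ℝ := (μ_p - lam_p) * ((lam_s - a * f_sd) * μ_p + a * f_sd * lam_p) with hD0def
  have hD0neg : D0 < 0 := by
    have h2 : (lam_s - a * f_sd) * μ_p + a * f_sd * lam_p < 0 := by nlinarith
    exact mul_neg_of_pos_of_neg hB h2
  have hD0ne : D0 ≠ 0 := ne_of_lt hD0neg
  -- derivative of the numerator
  have hN : HasDerivAt (fun x : ℝ => lam_p * lam_s * (x * f_sd * (μ_p - 1)) +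
      (lam_s ^ 2 - lam_s) * (μ_p - lam_p) * ((μ_p - lam_p) + lam_p))
      (lam_p * lam_s * (f_sd * (μ_p - 1))) a := by
    have h := ((hasDerivAt_id a).const_mul (lam_p * lam_s * (f_sd * (μ_p - 1)))).add_const
      ((lam_s ^ 2 - lam_s) * (μ_p - lam_p) * ((μ_p - lam_p) + lam_p))
    have heq : (fun x : ℝ => lam_p * lam_s * (x * f_sd * (μ_p - 1)) +
        (lam_s ^ 2 - lam_s) * (μ_p - lam_p) * ((μ_p - lam_p) + lam_p)) =
        (fun x : ℝ => lam_p * lam_s * (f_sd * (μ_p - 1)) * x +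
        (lam_s ^ 2 - lam_s) * (μ_p - lam_p) * ((μ_p - lam_p) + lam_p)) := by
      funext x; ring
    rw [heq]
    simpa [mul_comm] using h
  -- derivative of the denominator
  have hD : HasDerivAt (fun x : ℝ => (μ_p - lam_p) * ((lam_s - x * f_sd) * μ_p + x * f_sd * lam_p))
      ((μ_p - lam_p) * (f_sd * lam_p - f_sd * μ_p)) a := by
    have h := ((hasDerivAt_id a).const_mul ((μ_p - lam_p) * (f_sd * lam_p - f_sd * μ_p))).add_const
      ((μ_p - lam_p) * (lam_s * μ_p))
    have heq : (fun x : ℝ => (μ_p - lam_p) * ((lam_s - x * f_sd) * μ_p + x * f_sd * lam_p)) =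
        (fun x : ℝ => (μ_p - lam_p) * (f_sd * lam_p - f_sd * μ_p) * x +
          (μ_p - lam_p) * (lam_s * μ_p)) := by
      funext x; ring
    rw [heq]
    simpa [mul_comm] using h
  have hQ := (hN.div hD hD0ne).div_const lam_s
  have hderiv := hQ.deriv
  set M : ℝ := lam_s * (lam_p ^ 2 - lam_p) +
      (μ_p - lam_p) * (lam_s * μ_p - (μ_p - lam_p)) with hMdef
  have hMneg : M < 0 := by
    have h1 : lam_s * (lam_p ^ 2 - lam_p) < 0 := by
      have : lam_p ^ 2 - lam_p < 0 := by nlinarith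
      exact mul_neg_of_pos_of_neg hls this
    have haf : a * f_sd < 1 := by nlinarith
    have h2 : lam_s * μ_p - (μ_p - lam_p) < 0 := by
      have := mul_lt_mul_of_pos_right haf hB
      nlinarith
    nlinarith [mul_pos hB (neg_pos.mpr h2)]
  set K : ℝ := f_sd * μ_p * (μ_p - lam_p) / D0 ^ 2 with hKdef
  have hK : 0 < K := by
    apply div_pos
    · positivity
    · positivity
  have hval : deriv (fun a : ℝ =>
          ((lam_p * lam_s * (a * f_sd * (μ_p - 1)) +
              (lam_s ^ 2 - lam_s) * (μ_p - lam_p) * ((μ_p - lam_p) + lam_p)) /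
            ((μ_p - lam_p) * ((lam_s - a * f_sd) * μ_p + a * f_sd * lam_p))) / lam_s) a
      = K * M := by
    simp only [Pi.div_apply] at hderiv
    rw [hderiv, hKdef, hMdef]
    have hls' : lam_s ≠ 0 := ne_of_gt hls
    rw [hD0def]
    have hD0ne' : (μ_p - lam_p) * ((lam_s - a * f_sd) * μ_p + a * f_sd * lam_p) ≠ 0 := hD0ne
    field_simp
    ring
  exact ⟨⟨K, hK, hval⟩, hMneg, by rw [hval]; exact mul_neg_of_pos_of_neg hK hMneg⟩
end
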